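/- Let n, m ≥ 1 and let k, l be natural numbers with k ≤ m, l ≤ m and k + l ≥ 1. Let φ be a tempered distribution on ℝⁿ such that for every ε > 0 there exists C(ε) ≥ 0 with |φ(u·conj v)| ≤ ε‖u‖_k‖v‖_l + C(ε)‖u‖₀‖v‖₀ for all Schwartz functions u, v : ℝⁿ → ℂ. Then for every pair of multi-indices β, α with |β| = m−k and |α| = m−l and for every ε > 0 there exists C′(ε) ≥ 0 such that |φ(D^β f · conj(D^α f))| ≤ ε‖f‖_m² + C′(ε)‖f‖₀² for all Schwartz functions f. (The form (φ D^{m−k}f, D^{m−l}f) is subordinate to the form (∇^m f, ∇^m f) with arbitrarily small relative bound.) -/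

import Mathlib

open MeasureTheory SchwartzMap Real Complex
open scoped FourierTransform RealInnerProductSpace

noncomputable section Preamble

variable {E : Type*} [NormedAddCommGroup E] [NormedSpace ℝ E]

/-- A Schwartz function has temperate growth. -/
lemma schwartz_hasTemperateGrowth (f : 𝓢(E, ℂ)) : Function.HasTemperateGrowth ⇑f := by
  refine ⟨f.smooth', fun n => ⟨0, ?_⟩⟩
  obtain ⟨C, hC⟩ := f.decay' 0 n
  exact ⟨C, fun x => by
    have hx := hC x
    rw [pow_zero, one_mul] at hx
    rw [pow_zero, mul_one]
    exact hx⟩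

/-- The pointwise product of two Schwartz functions, as a Schwartz function. -/
def smul2 (f g : 𝓢(E, ℂ)) : 𝓢(E, ℂ) :=
  SchwartzMap.bilinLeftCLM (ContinuousLinearMap.mul ℝ ℂ)
    (schwartz_hasTemperateGrowth g) f

lemma smul2_apply (f g : 𝓢(E, ℂ)) (x : E) : smul2 f g x = f x * g x := rfl

/-- The pointwise complex conjugate of a Schwartz function, as a Schwartz function. -/
def conjS (f : 𝓢(E, ℂ)) : 𝓢(E, ℂ) where
  toFun := fun x => starRingEnd ℂ (f x)
  smooth' := Complex.conjLIE.toContinuousLinearEquiv.toContinuousLinearMap.contDiff.comp f.smooth'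
  decay' := by
    intro k n
    obtain ⟨C, hC⟩ := f.decay' k n
    refine ⟨C, fun x => ?_⟩
    have h := Complex.conjLIE.norm_iteratedFDeriv_comp_left (⇑f) x n
    calc ‖x‖ ^ k * ‖iteratedFDeriv ℝ n (fun y => starRingEnd ℂ (f y)) x‖
        = ‖x‖ ^ k * ‖iteratedFDeriv ℝ n (⇑f) x‖ := by rw [← h]; rfl
      _ ≤ C := hC x

lemma conjS_apply (f : 𝓢(E, ℂ)) (x : E) : conjS f x = starRingEnd ℂ (f x) := rfl

/-- `D^α = i^{|α|} ∂^α`, the multi-index derivative of a Schwartz function on `ℝⁿ`. -/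
def Dmulti {n : ℕ} (α : Fin n → ℕ) (f : 𝓢(EuclideanSpace ℝ (Fin n), ℂ)) :
    𝓢(EuclideanSpace ℝ (Fin n), ℂ) :=
  (Complex.I ^ (∑ i, α i)) •
    (List.finRange n).foldr
      (fun i g => (⇑(LineDeriv.lineDerivOpCLM ℝ 𝓢(EuclideanSpace ℝ (Fin n), ℂ) (EuclideanSpace.single i (1:ℝ))))^[α i] g) f

/-- The Sobolev `H^s₂` norm of a Schwartz function:
`‖f‖_s = (∫ (1+|ξ|²)^s |𝓕f(ξ)|² dξ)^{1/2}`. -/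
def sobolevNorm {ι : Type*} [Fintype ι] (s : ℝ)
    (f : 𝓢(EuclideanSpace ℝ ι, ℂ)) : ℝ :=
  (∫ ξ : EuclideanSpace ℝ ι, (1 + ‖ξ‖ ^ 2) ^ s * ‖𝓕 (⇑f) ξ‖ ^ 2) ^ (1/2 : ℝ)

/-- The Bessel-potential `H^γ_p` norm of a Schwartz function:
`‖φ‖_{γ,p} = ‖𝓕⁻¹((1+|ξ|²)^{γ/2} 𝓕φ)‖_{L^p}`. -/
def besselNorm {ι : Type*} [Fintype ι] (γ p : ℝ)
    (φ : 𝓢(EuclideanSpace ℝ ι, ℂ)) : ℝ :=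
  (eLpNorm (𝓕⁻ (fun ξ : EuclideanSpace ℝ ι =>
      ((1 + ‖ξ‖ ^ 2) ^ (γ / 2) : ℝ) • 𝓕 (⇑φ) ξ)) (ENNReal.ofReal p) volume).toReal

end Preamble

noncomputable section Aux
open SchwartzMap
variable {n : ℕ}
local notation "V" => EuclideanSpace ℝ (Fin n)

lemma fourier_pderiv (f : 𝓢(V, ℂ)) (v : V) (ξ : V) :
    𝓕 (⇑(LineDeriv.lineDerivOpCLM ℝ 𝓢(V, ℂ) v f)) ξ = (2 * π * Complex.I * ((inner ℝ ξ v : ℝ) : ℂ)) * 𝓕 (⇑f) ξ := by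
  have hI : Integrable (fderiv ℝ ⇑f) := by
    have := (SchwartzMap.fderivCLM ℝ V ℂ f).integrable (μ := volume)
    simpa [funext (SchwartzMap.fderivCLM_apply ℝ (E := V) f)] using this
  have h1 : 𝓕 (⇑(LineDeriv.lineDerivOpCLM ℝ 𝓢(V, ℂ) v f)) ξ = 𝓕 (fderiv ℝ ⇑f) ξ v := by
    rw [Real.fourier_continuousLinearMap_apply hI]
    rfl
  rw [h1, Real.fourier_fderiv f.integrable f.differentiable hI]
  simp [smul_smul, innerSL_apply_apply ℝ]
  ring

lemma norm_fourier_pderiv (f : 𝓢(V, ℂ)) (i : Fin n) (ξ : V) :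
    ‖𝓕 (⇑(LineDeriv.lineDerivOpCLM ℝ 𝓢(V, ℂ) (EuclideanSpace.single i (1:ℝ)) f)) ξ‖
      = (2 * π * |ξ i|) * ‖𝓕 (⇑f) ξ‖ := by
  rw [fourier_pderiv]
  have : (inner ℝ ξ (EuclideanSpace.single i (1:ℝ)) : ℝ) = ξ i := by
    simp [EuclideanSpace.inner_single_right]
  rw [this, norm_mul]
  have h2 : ‖(2 * (π:ℂ) * Complex.I * ((ξ i : ℝ) : ℂ))‖ = 2 * π * |ξ i| := by
    simp [norm_mul, _root_.abs_of_nonneg pi_nonneg]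
  rw [h2]

lemma norm_fourier_iter (f : 𝓢(V, ℂ)) (i : Fin n) (a : ℕ) (ξ : V) :
    ‖𝓕 (⇑((⇑(LineDeriv.lineDerivOpCLM ℝ 𝓢(V, ℂ) (EuclideanSpace.single i (1:ℝ))))^[a] f)) ξ‖
      = (2 * π * |ξ i|) ^ a * ‖𝓕 (⇑f) ξ‖ := by
  induction a generalizing f with
  | zero => simp
  | succ a ih =>
      rw [Function.iterate_succ_apply, ih, norm_fourier_pderiv]
      ring

lemma norm_fourier_foldr (α : Fin n → ℕ) (f : 𝓢(V, ℂ)) (ξ : V) (L : List (Fin n)) :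
    ‖𝓕 (⇑(L.foldr
        (fun i g => (⇑(LineDeriv.lineDerivOpCLM ℝ 𝓢(V, ℂ) (EuclideanSpace.single i (1:ℝ))))^[α i] g) f)) ξ‖
      = (L.map (fun i => (2 * π * |ξ i|) ^ (α i))).prod * ‖𝓕 (⇑f) ξ‖ := by
  induction L with
  | nil => simp
  | cons i L ih =>
      simp only [List.foldr_cons, List.map_cons, List.prod_cons]
      rw [norm_fourier_iter]
      rw [ih]
      ring

lemma norm_fourier_Dmulti (α : Fin n → ℕ) (f : 𝓢(V, ℂ)) (ξ : V) :
    ‖𝓕 (⇑(Dmulti α f)) ξ‖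
      = (2 * π) ^ (∑ i, α i) * (∏ i, |ξ i| ^ (α i)) * ‖𝓕 (⇑f) ξ‖ := by
  rw [Dmulti]
  set g := (List.finRange n).foldr
      (fun i g => (⇑(LineDeriv.lineDerivOpCLM ℝ 𝓢(V, ℂ) (EuclideanSpace.single i (1:ℝ))))^[α i] g) f with hg
  have hc : 𝓕 (⇑((Complex.I ^ (∑ i, α i)) • g)) ξ = Complex.I ^ (∑ i, α i) * 𝓕 (⇑g) ξ := by
    rw [← SchwartzMap.fourier_coe, ← SchwartzMap.fourier_coe]
    simp
  rw [hc, norm_mul]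
  simp only [norm_pow, Complex.norm_I, one_pow, one_mul]
  rw [hg, norm_fourier_foldr]
  congr 1
  rw [← Fin.prod_univ_def]
  rw [← Finset.prod_pow_eq_pow_sum, ← Finset.prod_mul_distrib]
  exact Finset.prod_congr rfl (fun i _ => by rw [mul_pow])

lemma abs_coord_le (ξ : V) (i : Fin n) : |ξ i| ≤ ‖ξ‖ := by
  rw [EuclideanSpace.norm_eq, ← Real.sqrt_sq_eq_abs]
  apply Real.sqrt_le_sqrt
  have := Finset.single_le_sum (f := fun j => ‖ξ j‖ ^ 2)
    (fun j _ => sq_nonneg _) (Finset.mem_univ i)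
  simpa [Real.norm_eq_abs, sq_abs] using this

/-- weighted L² integral of a Schwartz function -/
def wInt (s : ℕ) (g : 𝓢(V, ℂ)) : ℝ := ∫ ξ : V, (1 + ‖ξ‖ ^ 2) ^ s * ‖g ξ‖ ^ 2

lemma weight_bounded (s : ℕ) (g : 𝓢(V, ℂ)) :
    ∃ C : ℝ, ∀ ξ : V, (1 + ‖ξ‖ ^ 2) ^ s * ‖g ξ‖ ≤ C := by
  refine ⟨2 ^ (2 * s) * (Finset.Iic (2 * s, 0)).sup
    (fun m => SchwartzMap.seminorm ℝ m.1 m.2) g, fun ξ => ?_⟩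
  have h1 : (1 + ‖ξ‖ ^ 2) ^ s ≤ (1 + ‖ξ‖) ^ (2 * s) := by
    rw [pow_mul]
    apply pow_le_pow_left₀ (by positivity)
    nlinarith [norm_nonneg ξ]
  calc (1 + ‖ξ‖ ^ 2) ^ s * ‖g ξ‖ ≤ (1 + ‖ξ‖) ^ (2 * s) * ‖g ξ‖ := by
        apply mul_le_mul_of_nonneg_right h1 (norm_nonneg _)
    _ = (1 + ‖ξ‖) ^ (2 * s) * ‖iteratedFDeriv ℝ 0 (⇑g) ξ‖ := by
        rw [norm_iteratedFDeriv_zero]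
    _ ≤ _ := SchwartzMap.one_add_le_sup_seminorm_apply (m := (2 * s, 0)) le_rfl le_rfl g ξ

lemma integrable_w (s : ℕ) (g : 𝓢(V, ℂ)) :
    Integrable (fun ξ : V => (1 + ‖ξ‖ ^ 2) ^ s * ‖g ξ‖ ^ 2) := by
  obtain ⟨C, hC⟩ := weight_bounded s g
  have hint : Integrable (fun ξ : V => C * ‖g ξ‖) :=
    (g.integrable (μ := volume)).norm.const_mul C
  refine hint.mono' ?_ ?_
  · apply Continuous.aestronglyMeasurable
    have : Continuous (⇑g) := g.continuous
    fun_prop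
  · filter_upwards with ξ
    have h0 : 0 ≤ (1 + ‖ξ‖ ^ 2) ^ s * ‖g ξ‖ ^ 2 := by positivity
    rw [Real.norm_eq_abs, _root_.abs_of_nonneg h0]
    have he : (1 + ‖ξ‖ ^ 2) ^ s * ‖g ξ‖ ^ 2 = ((1 + ‖ξ‖ ^ 2) ^ s * ‖g ξ‖) * ‖g ξ‖ := by ring
    rw [he]
    exact mul_le_mul_of_nonneg_right (hC ξ) (norm_nonneg _)

lemma wInt_nonneg (s : ℕ) (g : 𝓢(V, ℂ)) : 0 ≤ wInt s g :=
  integral_nonneg (fun ξ => by positivity)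

lemma wInt_mono {s t : ℕ} (hst : s ≤ t) (g : 𝓢(V, ℂ)) : wInt s g ≤ wInt t g := by
  refine integral_mono (integrable_w s g) (integrable_w t g) (fun ξ => ?_)
  have h1 : (1:ℝ) ≤ 1 + ‖ξ‖ ^ 2 := by nlinarith [sq_nonneg ‖ξ‖]
  exact mul_le_mul_of_nonneg_right (pow_le_pow_right₀ h1 hst) (sq_nonneg _)

lemma pow_interp {a δ : ℝ} (ha : 1 ≤ a) (hδ : 0 < δ) {s m : ℕ} (hs : s < m) :
    a ^ s ≤ δ * a ^ m + max 1 (δ⁻¹ ^ s) := by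
  have ha0 : (0:ℝ) < a := lt_of_lt_of_le one_pos ha
  by_cases hcase : 1 ≤ δ * a ^ (m - s)
  · have h1 : a ^ s ≤ (δ * a ^ (m - s)) * a ^ s :=
      le_mul_of_one_le_left (by positivity) hcase
    have h2 : (δ * a ^ (m - s)) * a ^ s = δ * a ^ m := by
      rw [mul_assoc, ← pow_add]
      congr 2
      omega
    have h3 : (0:ℝ) ≤ max 1 (δ⁻¹ ^ s) := le_trans zero_le_one (le_max_left _ _)
    linarith [h1, h2.symm.le]
  · push_neg at hcase
    have h1 : a ≤ a ^ (m - s) := le_self_pow₀ ha (by omega)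
    have h2 : δ * a < 1 := lt_of_le_of_lt (by nlinarith) hcase
    have h3 : a < δ⁻¹ := by
      rw [← one_div, lt_div_iff₀ hδ]
      nlinarith
    have h4 : a ^ s ≤ δ⁻¹ ^ s := pow_le_pow_left₀ ha0.le h3.le s
    have h5 : (0:ℝ) ≤ δ * a ^ m := by positivity
    calc a ^ s ≤ δ⁻¹ ^ s := h4
      _ ≤ max 1 (δ⁻¹ ^ s) := le_max_right _ _
      _ ≤ δ * a ^ m + max 1 (δ⁻¹ ^ s) := le_add_of_nonneg_left h5

lemma wInt_interp {s m : ℕ} (hs : s < m) {δ : ℝ} (hδ : 0 < δ) (g : 𝓢(V, ℂ)) :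
    wInt s g ≤ δ * wInt m g + max 1 (δ⁻¹ ^ s) * wInt 0 g := by
  set C := max 1 (δ⁻¹ ^ s) with hCdef
  have key : ∀ ξ : V, (1 + ‖ξ‖ ^ 2) ^ s * ‖g ξ‖ ^ 2 ≤
      δ * ((1 + ‖ξ‖ ^ 2) ^ m * ‖g ξ‖ ^ 2) + C * ((1 + ‖ξ‖ ^ 2) ^ 0 * ‖g ξ‖ ^ 2) := by
    intro ξ
    have h1 : (1:ℝ) ≤ 1 + ‖ξ‖ ^ 2 := by nlinarith [sq_nonneg ‖ξ‖]
    have h2 := pow_interp h1 hδ hs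
    have h3 := mul_le_mul_of_nonneg_right h2 (sq_nonneg ‖g ξ‖)
    calc (1 + ‖ξ‖ ^ 2) ^ s * ‖g ξ‖ ^ 2
        ≤ (δ * (1 + ‖ξ‖ ^ 2) ^ m + C) * ‖g ξ‖ ^ 2 := h3
      _ = δ * ((1 + ‖ξ‖ ^ 2) ^ m * ‖g ξ‖ ^ 2) + C * ((1 + ‖ξ‖ ^ 2) ^ 0 * ‖g ξ‖ ^ 2) := by
          rw [pow_zero]; ring
  calc wInt s g ≤ ∫ ξ : V, (δ * ((1 + ‖ξ‖ ^ 2) ^ m * ‖g ξ‖ ^ 2)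
        + C * ((1 + ‖ξ‖ ^ 2) ^ 0 * ‖g ξ‖ ^ 2)) :=
      integral_mono (integrable_w s g)
        (((integrable_w m g).const_mul δ).add ((integrable_w 0 g).const_mul C)) key
    _ = δ * wInt m g + C * wInt 0 g := by
      rw [integral_add ((integrable_w m g).const_mul δ) ((integrable_w 0 g).const_mul C),
        MeasureTheory.integral_const_mul, MeasureTheory.integral_const_mul]
      rfl

lemma sobolev_eq (s : ℕ) (f : 𝓢(V, ℂ)) :
    sobolevNorm (s : ℝ) f = Real.sqrt (wInt s (SchwartzMap.fourierTransformCLM ℂ f)) := by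
  rw [sobolevNorm, wInt, Real.sqrt_eq_rpow]
  congr 1
  refine integral_congr_ae (Filter.Eventually.of_forall (fun ξ => ?_))
  show (1 + ‖ξ‖ ^ 2) ^ (s:ℝ) * ‖𝓕 (⇑f) ξ‖ ^ 2
      = (1 + ‖ξ‖ ^ 2) ^ s * ‖(SchwartzMap.fourierTransformCLM ℂ f) ξ‖ ^ 2
  rw [Real.rpow_natCast, SchwartzMap.fourierTransformCLM_apply]
  rfl

lemma sobolev_sq (s : ℕ) (f : 𝓢(V, ℂ)) :
    sobolevNorm (s : ℝ) f ^ 2 = wInt s (SchwartzMap.fourierTransformCLM ℂ f) := by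
  rw [sobolev_eq, Real.sq_sqrt (wInt_nonneg _ _)]

lemma wInt_Dmulti_le (β : Fin n → ℕ) (s : ℕ) (f : 𝓢(V, ℂ)) :
    wInt s (SchwartzMap.fourierTransformCLM ℂ (Dmulti β f)) ≤
      (2 * π) ^ (2 * (∑ i, β i)) *
        wInt (s + ∑ i, β i) (SchwartzMap.fourierTransformCLM ℂ f) := by
  set b := ∑ i, β i with hb
  have key : ∀ ξ : V, (1 + ‖ξ‖ ^ 2) ^ s * ‖(SchwartzMap.fourierTransformCLM ℂ (Dmulti β f)) ξ‖ ^ 2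
      ≤ (2 * π) ^ (2 * b) *
        ((1 + ‖ξ‖ ^ 2) ^ (s + b) * ‖(SchwartzMap.fourierTransformCLM ℂ f) ξ‖ ^ 2) := by
    intro ξ
    have hD : ‖(SchwartzMap.fourierTransformCLM ℂ (Dmulti β f)) ξ‖
        = (2 * π) ^ b * (∏ i, |ξ i| ^ (β i)) * ‖(SchwartzMap.fourierTransformCLM ℂ f) ξ‖ := by
      simp only [SchwartzMap.fourierTransformCLM_apply]
      exact norm_fourier_Dmulti β f ξ
    have h1 : (1:ℝ) ≤ 1 + ‖ξ‖ ^ 2 := by nlinarith [sq_nonneg ‖ξ‖]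
    have hPn : (0:ℝ) ≤ ∏ i, |ξ i| ^ (β i) :=
      Finset.prod_nonneg (fun i _ => by positivity)
    have hP : (∏ i, |ξ i| ^ (β i)) ^ 2 ≤ (1 + ‖ξ‖ ^ 2) ^ b := by
      have hp1 : (∏ i, |ξ i| ^ (β i)) ≤ ‖ξ‖ ^ b := by
        rw [hb, ← Finset.prod_pow_eq_pow_sum]
        exact Finset.prod_le_prod (fun i _ => by positivity)
          (fun i _ => pow_le_pow_left₀ (abs_nonneg _) (abs_coord_le ξ i) _)
      calc (∏ i, |ξ i| ^ (β i)) ^ 2 ≤ (‖ξ‖ ^ b) ^ 2 :=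
            pow_le_pow_left₀ hPn hp1 2
        _ = (‖ξ‖ ^ 2) ^ b := by ring
        _ ≤ (1 + ‖ξ‖ ^ 2) ^ b := pow_le_pow_left₀ (sq_nonneg _) (by linarith) b
    rw [hD]
    have expand : (1 + ‖ξ‖ ^ 2) ^ s *
        ((2 * π) ^ b * (∏ i, |ξ i| ^ (β i)) * ‖(SchwartzMap.fourierTransformCLM ℂ f) ξ‖) ^ 2
        = (2 * π) ^ (2 * b) * ((1 + ‖ξ‖ ^ 2) ^ s * (∏ i, |ξ i| ^ (β i)) ^ 2 *
            ‖(SchwartzMap.fourierTransformCLM ℂ f) ξ‖ ^ 2) := by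
      ring
    rw [expand, pow_add]
    apply mul_le_mul_of_nonneg_left _ (by positivity : (0:ℝ) ≤ (2 * π) ^ (2 * b))
    apply mul_le_mul_of_nonneg_right _ (sq_nonneg _)
    exact mul_le_mul_of_nonneg_left hP (by positivity)
  calc wInt s (SchwartzMap.fourierTransformCLM ℂ (Dmulti β f))
      ≤ ∫ ξ : V, (2 * π) ^ (2 * b) *
        ((1 + ‖ξ‖ ^ 2) ^ (s + b) * ‖(SchwartzMap.fourierTransformCLM ℂ f) ξ‖ ^ 2) :=
      integral_mono (integrable_w s _)
        ((integrable_w (s + b) _).const_mul _) key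
    _ = (2 * π) ^ (2 * b) * wInt (s + b) (SchwartzMap.fourierTransformCLM ℂ f) := by
      rw [MeasureTheory.integral_const_mul]; rfl

lemma my_sqrt_add_le {x y : ℝ} (hx : 0 ≤ x) (hy : 0 ≤ y) :
    Real.sqrt (x + y) ≤ Real.sqrt x + Real.sqrt y := by
  have h : x + y ≤ (Real.sqrt x + Real.sqrt y) ^ 2 := by
    nlinarith [Real.sq_sqrt hx, Real.sq_sqrt hy, Real.sqrt_nonneg x, Real.sqrt_nonneg y]
  calc Real.sqrt (x + y) ≤ Real.sqrt ((Real.sqrt x + Real.sqrt y) ^ 2) := Real.sqrt_le_sqrt h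
    _ = Real.sqrt x + Real.sqrt y := Real.sqrt_sq (by positivity)

lemma prod_interp_bound {m s t : ℕ} (hs : s < m) (ht : t ≤ m) {K ε : ℝ} (hK : 0 ≤ K)
    (hε : 0 < ε) :
    ∃ C' : ℝ, 0 ≤ C' ∧ ∀ g : 𝓢(V, ℂ),
      K * (Real.sqrt (wInt s g) * Real.sqrt (wInt t g)) ≤
        (ε / 2) * wInt m g + C' * wInt 0 g := by
  set δ : ℝ := (ε / (4 * (K + 1))) ^ 2 with hδdef
  have hK1 : (0:ℝ) < 4 * (K + 1) := by linarith
  have hδ : 0 < δ := pow_pos (div_pos hε hK1) 2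
  set Cδ : ℝ := max 1 (δ⁻¹ ^ s) with hCδ
  have hCδ0 : (0:ℝ) ≤ Cδ := le_trans zero_le_one (le_max_left _ _)
  set B2 : ℝ := K * Real.sqrt Cδ with hB2
  have hB20 : 0 ≤ B2 := mul_nonneg hK (Real.sqrt_nonneg _)
  refine ⟨B2 ^ 2 / ε, div_nonneg (sq_nonneg _) hε.le, fun g => ?_⟩
  set y := Real.sqrt (wInt m g) with hy
  set x := Real.sqrt (wInt 0 g) with hx
  have hy0 : 0 ≤ y := Real.sqrt_nonneg _
  have hx0 : 0 ≤ x := Real.sqrt_nonneg _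
  have hym : wInt m g = y ^ 2 := (Real.sq_sqrt (wInt_nonneg _ _)).symm
  have hxm : wInt 0 g = x ^ 2 := (Real.sq_sqrt (wInt_nonneg _ _)).symm
  have hws : Real.sqrt (wInt s g) ≤ Real.sqrt δ * y + Real.sqrt Cδ * x := by
    calc Real.sqrt (wInt s g) ≤ Real.sqrt (δ * wInt m g + Cδ * wInt 0 g) :=
          Real.sqrt_le_sqrt (wInt_interp hs hδ g)
      _ ≤ Real.sqrt (δ * wInt m g) + Real.sqrt (Cδ * wInt 0 g) :=
          my_sqrt_add_le (mul_nonneg hδ.le (wInt_nonneg _ _)) (mul_nonneg hCδ0 (wInt_nonneg _ _))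
      _ = Real.sqrt δ * y + Real.sqrt Cδ * x := by
          rw [Real.sqrt_mul hδ.le, Real.sqrt_mul hCδ0]
  have hwt : Real.sqrt (wInt t g) ≤ y := Real.sqrt_le_sqrt (wInt_mono ht g)
  have hsd : Real.sqrt δ = ε / (4 * (K + 1)) := Real.sqrt_sq (div_pos hε hK1).le
  have hKd : K * Real.sqrt δ ≤ ε / 4 := by
    rw [hsd, mul_div_assoc', div_le_div_iff₀ hK1 (by norm_num : (0:ℝ) < 4)]
    nlinarith
  have hmid : B2 * (x * y) ≤ (ε / 4) * y ^ 2 + (B2 ^ 2 / ε) * x ^ 2 := by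
    have hmul : 4 * ε * (B2 * (x * y)) ≤ 4 * ε * ((ε / 4) * y ^ 2 + (B2 ^ 2 / ε) * x ^ 2) := by
      have expand : 4 * ε * ((ε / 4) * y ^ 2 + (B2 ^ 2 / ε) * x ^ 2)
          = ε ^ 2 * y ^ 2 + 4 * B2 ^ 2 * x ^ 2 := by
        field_simp
      rw [expand]
      nlinarith [sq_nonneg (ε * y - 2 * B2 * x)]
    exact le_of_mul_le_mul_left hmul (by positivity)
  have hsnn : 0 ≤ Real.sqrt (wInt s g) := Real.sqrt_nonneg _
  calc K * (Real.sqrt (wInt s g) * Real.sqrt (wInt t g))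
      ≤ K * ((Real.sqrt δ * y + Real.sqrt Cδ * x) * y) := by
        apply mul_le_mul_of_nonneg_left _ hK
        exact mul_le_mul hws hwt (Real.sqrt_nonneg _) (by positivity)
    _ = (K * Real.sqrt δ) * y ^ 2 + B2 * (x * y) := by rw [hB2]; ring
    _ ≤ (ε / 4) * y ^ 2 + ((ε / 4) * y ^ 2 + (B2 ^ 2 / ε) * x ^ 2) := by
        have := mul_le_mul_of_nonneg_right hKd (sq_nonneg y)
        linarith [hmid]
    _ = (ε / 2) * y ^ 2 + (B2 ^ 2 / ε) * x ^ 2 := by ring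
    _ = (ε / 2) * wInt m g + (B2 ^ 2 / ε) * wInt 0 g := by rw [hym, hxm]

end Aux


/-- If `φ ∈ M₀[k,-l]`, the form `(φ D^{m-k}f, D^{m-l}f)` is subordinate to
`(∇^m f, ∇^m f)` with arbitrarily small relative bound. -/
theorem multiplier_quadratic_form_subordinate {n m : ℕ} (hn : 1 ≤ n) (hm : 1 ≤ m)
    {k l : ℕ} (hk : k ≤ m) (hl : l ≤ m) (hkl : 1 ≤ k + l)
    (φ : 𝓢(EuclideanSpace ℝ (Fin n), ℂ) →L[ℂ] ℂ)
    (h : ∀ ε : ℝ, 0 < ε → ∃ Cε : ℝ, 0 ≤ Cε ∧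
      ∀ u v : 𝓢(EuclideanSpace ℝ (Fin n), ℂ),
        ‖φ (smul2 u (conjS v))‖ ≤ ε * sobolevNorm (k : ℝ) u * sobolevNorm (l : ℝ) v +
          Cε * sobolevNorm 0 u * sobolevNorm 0 v) :
    ∀ β α : Fin n → ℕ, (∑ i, β i) = m - k → (∑ i, α i) = m - l →
      ∀ ε : ℝ, 0 < ε → ∃ C' : ℝ, 0 ≤ C' ∧
        ∀ f : 𝓢(EuclideanSpace ℝ (Fin n), ℂ),
          ‖φ (smul2 (Dmulti β f) (conjS (Dmulti α f)))‖ ≤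
            ε * sobolevNorm (m : ℝ) f ^ 2 + C' * sobolevNorm 0 f ^ 2 := by
  intro β α hβ hα ε hε
  have h2π : (1:ℝ) ≤ 2 * π := by nlinarith [Real.pi_gt_three]
  set B : ℝ := (2 * π) ^ (2 * m) with hBdef
  have hB1 : (1:ℝ) ≤ B := one_le_pow₀ h2π
  have hBpos : (0:ℝ) < B := lt_of_lt_of_le one_pos hB1
  obtain ⟨Cε, hCε0, hCε⟩ := h (ε / (2 * B)) (by positivity)
  set K := Cε * B with hKdef
  have hK0 : 0 ≤ K := mul_nonneg hCε0 hBpos.le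
  set FT := fun f : 𝓢(EuclideanSpace ℝ (Fin n), ℂ) => SchwartzMap.fourierTransformCLM ℂ f with hFT
  have hDb : ∀ (γ : Fin n → ℕ) (s : ℕ) (f : 𝓢(EuclideanSpace ℝ (Fin n), ℂ)),
      (∑ i, γ i) + s ≤ m →
      wInt s (FT (Dmulti γ f)) ≤ B * wInt (s + ∑ i, γ i) (FT f) := by
    intro γ s f hle
    have h1 := wInt_Dmulti_le γ s f
    have h2 : (2 * π) ^ (2 * (∑ i, γ i)) ≤ B := by
      rw [hBdef]
      exact pow_le_pow_right₀ h2π (by omega)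
    calc wInt s (FT (Dmulti γ f)) ≤ (2 * π) ^ (2 * (∑ i, γ i)) * wInt (s + ∑ i, γ i) (FT f) := h1
      _ ≤ B * wInt (s + ∑ i, γ i) (FT f) :=
          mul_le_mul_of_nonneg_right h2 (wInt_nonneg _ _)
  have W1 : ∀ f, wInt k (FT (Dmulti β f)) ≤ B * wInt m (FT f) := by
    intro f
    have := hDb β k f (by omega)
    rwa [show k + ∑ i, β i = m by omega] at this
  have W2 : ∀ f, wInt l (FT (Dmulti α f)) ≤ B * wInt m (FT f) := by
    intro f
    have := hDb α l f (by omega)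
    rwa [show l + ∑ i, α i = m by omega] at this
  have W3 : ∀ f, wInt 0 (FT (Dmulti β f)) ≤ B * wInt (m - k) (FT f) := by
    intro f
    have := hDb β 0 f (by omega)
    rwa [show 0 + ∑ i, β i = m - k by omega] at this
  have W4 : ∀ f, wInt 0 (FT (Dmulti α f)) ≤ B * wInt (m - l) (FT f) := by
    intro f
    have := hDb α 0 f (by omega)
    rwa [show 0 + ∑ i, α i = m - l by omega] at this
  have s0 : ∀ u : 𝓢(EuclideanSpace ℝ (Fin n), ℂ),
      sobolevNorm (0:ℝ) u = Real.sqrt (wInt 0 (FT u)) := by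
    intro u
    have := sobolev_eq 0 u
    simpa [hFT] using this
  -- the product interpolation bound
  have hprod : ∃ C' : ℝ, 0 ≤ C' ∧ ∀ g : 𝓢(EuclideanSpace ℝ (Fin n), ℂ),
      K * (Real.sqrt (wInt (m - k) g) * Real.sqrt (wInt (m - l) g)) ≤
        (ε / 2) * wInt m g + C' * wInt 0 g := by
    by_cases h1k : 1 ≤ k
    · obtain ⟨C', hC'0, hC'⟩ := prod_interp_bound (n := n)
        (show m - k < m by omega) (show m - l ≤ m by omega) hK0 hε
      exact ⟨C', hC'0, hC'⟩
    · obtain ⟨C', hC'0, hC'⟩ := prod_interp_bound (n := n)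
        (show m - l < m by omega) (show m - k ≤ m by omega) hK0 hε
      refine ⟨C', hC'0, fun g => ?_⟩
      have := hC' g
      calc K * (Real.sqrt (wInt (m - k) g) * Real.sqrt (wInt (m - l) g))
          = K * (Real.sqrt (wInt (m - l) g) * Real.sqrt (wInt (m - k) g)) := by ring
        _ ≤ (ε / 2) * wInt m g + C' * wInt 0 g := this
  obtain ⟨C', hC'0, hC'⟩ := hprod
  refine ⟨C', hC'0, fun f => ?_⟩
  set u := Dmulti β f with hu
  set v := Dmulti α f with hv
  have hunn : ∀ (s : ℕ) (w : 𝓢(EuclideanSpace ℝ (Fin n), ℂ)), 0 ≤ sobolevNorm (s:ℝ) w := by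
    intro s w
    rw [sobolev_eq]
    exact Real.sqrt_nonneg _
  have hu_k : sobolevNorm (k:ℝ) u ≤ Real.sqrt B * Real.sqrt (wInt m (FT f)) := by
    rw [sobolev_eq]
    calc Real.sqrt (wInt k (FT u)) ≤ Real.sqrt (B * wInt m (FT f)) :=
          Real.sqrt_le_sqrt (W1 f)
      _ = Real.sqrt B * Real.sqrt (wInt m (FT f)) := Real.sqrt_mul hBpos.le _
  have hv_l : sobolevNorm (l:ℝ) v ≤ Real.sqrt B * Real.sqrt (wInt m (FT f)) := by
    rw [sobolev_eq]
    calc Real.sqrt (wInt l (FT v)) ≤ Real.sqrt (B * wInt m (FT f)) :=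
          Real.sqrt_le_sqrt (W2 f)
      _ = Real.sqrt B * Real.sqrt (wInt m (FT f)) := Real.sqrt_mul hBpos.le _
  have hu_0 : sobolevNorm (0:ℝ) u ≤ Real.sqrt B * Real.sqrt (wInt (m - k) (FT f)) := by
    rw [s0]
    calc Real.sqrt (wInt 0 (FT u)) ≤ Real.sqrt (B * wInt (m - k) (FT f)) :=
          Real.sqrt_le_sqrt (W3 f)
      _ = _ := Real.sqrt_mul hBpos.le _
  have hv_0 : sobolevNorm (0:ℝ) v ≤ Real.sqrt B * Real.sqrt (wInt (m - l) (FT f)) := by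
    rw [s0]
    calc Real.sqrt (wInt 0 (FT v)) ≤ Real.sqrt (B * wInt (m - l) (FT f)) :=
          Real.sqrt_le_sqrt (W4 f)
      _ = _ := Real.sqrt_mul hBpos.le _
  have hBB : Real.sqrt B * Real.sqrt B = B := Real.mul_self_sqrt hBpos.le
  have t1 : (ε / (2 * B)) * sobolevNorm (k:ℝ) u * sobolevNorm (l:ℝ) v ≤
      (ε / 2) * wInt m (FT f) := by
    have hmul : sobolevNorm (k:ℝ) u * sobolevNorm (l:ℝ) v ≤ B * wInt m (FT f) := by
      calc sobolevNorm (k:ℝ) u * sobolevNorm (l:ℝ) v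
          ≤ (Real.sqrt B * Real.sqrt (wInt m (FT f))) *
            (Real.sqrt B * Real.sqrt (wInt m (FT f))) :=
            mul_le_mul hu_k hv_l (hunn l v) (by positivity)
        _ = (Real.sqrt B * Real.sqrt B) *
            (Real.sqrt (wInt m (FT f)) * Real.sqrt (wInt m (FT f))) := by ring
        _ = B * wInt m (FT f) := by
            rw [hBB, Real.mul_self_sqrt (wInt_nonneg _ _)]
    calc (ε / (2 * B)) * sobolevNorm (k:ℝ) u * sobolevNorm (l:ℝ) v
        = (ε / (2 * B)) * (sobolevNorm (k:ℝ) u * sobolevNorm (l:ℝ) v) := by ring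
      _ ≤ (ε / (2 * B)) * (B * wInt m (FT f)) :=
          mul_le_mul_of_nonneg_left hmul (by positivity)
      _ = (ε / 2) * wInt m (FT f) := by
          field_simp
  have t2 : Cε * sobolevNorm (0:ℝ) u * sobolevNorm (0:ℝ) v ≤
      K * (Real.sqrt (wInt (m - k) (FT f)) * Real.sqrt (wInt (m - l) (FT f))) := by
    have hmul : sobolevNorm (0:ℝ) u * sobolevNorm (0:ℝ) v ≤
        B * (Real.sqrt (wInt (m - k) (FT f)) * Real.sqrt (wInt (m - l) (FT f))) := by
      calc sobolevNorm (0:ℝ) u * sobolevNorm (0:ℝ) v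
          ≤ (Real.sqrt B * Real.sqrt (wInt (m - k) (FT f))) *
            (Real.sqrt B * Real.sqrt (wInt (m - l) (FT f))) :=
            mul_le_mul hu_0 hv_0 (by simpa using hunn 0 v) (by positivity)
        _ = (Real.sqrt B * Real.sqrt B) *
            (Real.sqrt (wInt (m - k) (FT f)) * Real.sqrt (wInt (m - l) (FT f))) := by ring
        _ = _ := by rw [hBB]
    calc Cε * sobolevNorm (0:ℝ) u * sobolevNorm (0:ℝ) v
        = Cε * (sobolevNorm (0:ℝ) u * sobolevNorm (0:ℝ) v) := by ring
      _ ≤ Cε * (B * (Real.sqrt (wInt (m - k) (FT f)) * Real.sqrt (wInt (m - l) (FT f)))) :=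
          mul_le_mul_of_nonneg_left hmul hCε0
      _ = K * (Real.sqrt (wInt (m - k) (FT f)) * Real.sqrt (wInt (m - l) (FT f))) := by
          rw [hKdef]; ring
  have hsq_m : sobolevNorm (m:ℝ) f ^ 2 = wInt m (FT f) := sobolev_sq m f
  have hsq_0 : sobolevNorm (0:ℝ) f ^ 2 = wInt 0 (FT f) := by
    rw [s0, Real.sq_sqrt (wInt_nonneg _ _)]
  calc ‖φ (smul2 u (conjS v))‖
      ≤ (ε / (2 * B)) * sobolevNorm (k:ℝ) u * sobolevNorm (l:ℝ) v +
        Cε * sobolevNorm (0:ℝ) u * sobolevNorm (0:ℝ) v := hCε u v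
    _ ≤ (ε / 2) * wInt m (FT f) +
        K * (Real.sqrt (wInt (m - k) (FT f)) * Real.sqrt (wInt (m - l) (FT f))) :=
        add_le_add t1 t2
    _ ≤ (ε / 2) * wInt m (FT f) + ((ε / 2) * wInt m (FT f) + C' * wInt 0 (FT f)) :=
        add_le_add le_rfl (hC' (FT f))
    _ = ε * wInt m (FT f) + C' * wInt 0 (FT f) := by ring
    _ = ε * sobolevNorm (m:ℝ) f ^ 2 + C' * sobolevNorm (0:ℝ) f ^ 2 := by
        rw [hsq_m, hsq_0]
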